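/- For nonnegative reals z_k(i) (k = 1,…,n, i = 0,…,k) satisfying ∑_{i=0}^k z_k(i)² ≤ δ for each k, the objective ∑_{i=0}^{n−1} (1/(n−i+1))² (∑_{k=i+1}^n z_k(i))² is bounded above by δ·(1/4 + ∑_{i=2}^n 1/(2i+1)). -/

import Mathlib

open Finset

/-- Dual variables. -/
noncomputable def lamD (n k : ℕ) : ℝ :=
  if k = n then 1/4 else 1/(2*((n - k : ℕ) : ℝ)+3)

lemma lamD_pos (n k : ℕ) : 0 < lamD n k := by
  unfold lamD; split <;> positivity

lemma sum_inv_lamD (n : ℕ) (m : ℕ) (hm1 : 1 ≤ m) : m ≤ n →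
    ∑ k ∈ Icc (n - m + 1) n, (lamD n k)⁻¹ = ((m : ℝ) + 1)^2 := by
  induction m, hm1 using Nat.le_induction with
  | base =>
    intro hn
    have : n - 1 + 1 = n := by omega
    rw [this, Icc_self, sum_singleton]
    simp [lamD]
    norm_num
  | succ m hm ih =>
    intro hmn
    have h1 : n - (m + 1) + 1 = n - m := by omega
    have h2 : Icc (n - m + 1) n = Ioc (n - m) n := (Finset.Icc_add_one_left_eq_Ioc _ _)
    have h3 : n - m ≤ n := by omega
    rw [h1, ← Finset.Ioc_insert_left h3, Finset.sum_insert (by simp), ← h2,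
      ih (by omega)]
    have hne : n - m ≠ n := by omega
    have : (lamD n (n - m))⁻¹ = 2*(m:ℝ)+3 := by
      unfold lamD
      rw [if_neg hne]
      have : n - (n - m) = m := by omega
      rw [this]
      rw [one_div, inv_inv]
    rw [this]
    push_cast
    ring

lemma sum_lamD (n : ℕ) (hn : 1 ≤ n) :
    ∑ k ∈ Icc 1 n, lamD n k = 1/4 + ∑ i ∈ Icc 2 n, 1/(2*(i:ℝ)+1) := by
  obtain ⟨b, rfl⟩ : ∃ b, n = b + 1 := ⟨n - 1, by omega⟩
  rw [Finset.sum_Icc_succ_top (by omega)]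
  have hlast : lamD (b+1) (b+1) = 1/4 := by simp [lamD]
  rw [hlast]
  rw [add_comm]
  congr 1
  refine Finset.sum_nbij' (fun k => b + 2 - k) (fun i => b + 2 - i) ?_ ?_ ?_ ?_ ?_
  · intro k hk; simp only [mem_Icc] at *; omega
  · intro i hi; simp only [mem_Icc] at *; omega
  · intro k hk; simp only [mem_Icc] at *; omega
  · intro i hi; simp only [mem_Icc] at *; omega
  · intro k hk
    simp only [mem_Icc] at hk
    unfold lamD
    rw [if_neg (by omega)]
    have h1 : ((b + 1 - k : ℕ) : ℝ) = (b:ℝ) + 1 - k := by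
      have : (b + 1 - k) + k = b + 1 := by omega
      have := congrArg (fun x : ℕ => (x : ℝ)) this
      push_cast at this
      linarith
    have h2 : ((b + 2 - k : ℕ) : ℝ) = (b:ℝ) + 2 - k := by
      have : (b + 2 - k) + k = b + 2 := by omega
      have := congrArg (fun x : ℕ => (x : ℝ)) this
      push_cast at this
      linarith
    rw [h1, h2]
    congr 1
    ring

/-- Weak duality bound for the primal problem `𝒫₁(n)`: for nonnegative `z_k(i)`
with `∑_{i=0}^k z_k(i)² ≤ δ` for each `k = 1,…,n`, the primal objective is at most
the dual optimal value `δ(1/4 + ∑_{i=2}^n 1/(2i+1))`. -/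
theorem primal_le_dual (n : ℕ) (δ : ℝ) (hδ : 0 < δ) (z : ℕ → ℕ → ℝ)
    (hz : ∀ k ∈ Icc 1 n, ∀ i ∈ Icc 0 k, 0 ≤ z k i)
    (hcon : ∀ k ∈ Icc 1 n, ∑ i ∈ Icc 0 k, (z k i) ^ 2 ≤ δ) :
    ∑ i ∈ range n, (1 / ((n : ℝ) - (i : ℝ) + 1)) ^ 2 * (∑ k ∈ Icc (i + 1) n, z k i) ^ 2 ≤
      δ * (1 / 4 + ∑ i ∈ Icc 2 n, 1 / (2 * (i : ℝ) + 1)) := by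
  rcases Nat.eq_zero_or_pos n with hn | hn
  · subst hn
    simp
    positivity
  -- Step 1: per-index Cauchy-Schwarz
  have key : ∀ i ∈ range n,
      (1 / ((n : ℝ) - (i : ℝ) + 1)) ^ 2 * (∑ k ∈ Icc (i + 1) n, z k i) ^ 2 ≤
      ∑ k ∈ Icc (i + 1) n, lamD n k * (z k i)^2 := by
    intro i hi
    rw [mem_range] at hi
    have hcs := Finset.sum_mul_sq_le_sq_mul_sq (Icc (i+1) n)
      (fun k => (Real.sqrt (lamD n k))⁻¹) (fun k => Real.sqrt (lamD n k) * z k i)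
    have heq : ∀ k ∈ Icc (i+1) n,
        (Real.sqrt (lamD n k))⁻¹ * (Real.sqrt (lamD n k) * z k i) = z k i := by
      intro k _
      have h0 : Real.sqrt (lamD n k) ≠ 0 :=
        Real.sqrt_ne_zero'.mpr (lamD_pos n k)
      field_simp
    rw [Finset.sum_congr rfl heq] at hcs
    have hsq1 : ∀ k ∈ Icc (i+1) n, ((Real.sqrt (lamD n k))⁻¹)^2 = (lamD n k)⁻¹ := by
      intro k _
      rw [← Real.sqrt_inv, Real.sq_sqrt (inv_nonneg.mpr (lamD_pos n k).le)]
    have hsq2 : ∀ k ∈ Icc (i+1) n,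
        (Real.sqrt (lamD n k) * z k i)^2 = lamD n k * (z k i)^2 := by
      intro k _
      rw [mul_pow, Real.sq_sqrt (lamD_pos n k).le]
    rw [Finset.sum_congr rfl hsq1, Finset.sum_congr rfl hsq2] at hcs
    have hinv : ∑ k ∈ Icc (i+1) n, (lamD n k)⁻¹ = ((n : ℝ) - (i : ℝ) + 1)^2 := by
      have h := sum_inv_lamD n (n - i) (by omega) (by omega)
      have h1 : n - (n - i) + 1 = i + 1 := by omega
      rw [h1] at h
      rw [h]
      have : ((n - i : ℕ) : ℝ) = (n:ℝ) - i := by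
        have : (n - i) + i = n := by omega
        have := congrArg (fun x : ℕ => (x : ℝ)) this
        push_cast at this
        linarith
      rw [this]
    rw [hinv] at hcs
    have ha : (0 : ℝ) < (n : ℝ) - (i : ℝ) + 1 := by
      have : (i : ℝ) < n := by exact_mod_cast hi
      linarith
    calc (1 / ((n : ℝ) - (i : ℝ) + 1)) ^ 2 * (∑ k ∈ Icc (i + 1) n, z k i) ^ 2
        ≤ (1 / ((n : ℝ) - (i : ℝ) + 1)) ^ 2 *
          (((n : ℝ) - (i : ℝ) + 1)^2 * ∑ k ∈ Icc (i+1) n, lamD n k * (z k i)^2) := by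
          apply mul_le_mul_of_nonneg_left hcs (by positivity)
      _ = ∑ k ∈ Icc (i+1) n, lamD n k * (z k i)^2 := by
          field_simp
  -- Step 2: sum up and swap
  calc ∑ i ∈ range n, (1 / ((n : ℝ) - (i : ℝ) + 1)) ^ 2 * (∑ k ∈ Icc (i + 1) n, z k i) ^ 2
      ≤ ∑ i ∈ range n, ∑ k ∈ Icc (i + 1) n, lamD n k * (z k i)^2 :=
        Finset.sum_le_sum key
    _ = ∑ k ∈ Icc 1 n, ∑ i ∈ range k, lamD n k * (z k i)^2 := by
        have swap := Finset.sum_Ico_Ico_comm' 0 (n+1) (fun i k => lamD n k * (z k i)^2)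
        have el : ∑ i ∈ Ico 0 (n+1), ∑ k ∈ Ico (i + 1) (n+1), lamD n k * (z k i)^2
            = ∑ i ∈ range n, ∑ k ∈ Icc (i + 1) n, lamD n k * (z k i)^2 := by
          rw [Nat.Ico_zero_eq_range, Finset.sum_range_succ]
          simp [Finset.Ico_add_one_right_eq_Icc]
        have er : ∑ k ∈ Ico 0 (n+1), ∑ i ∈ Ico 0 k, lamD n k * (z k i)^2
            = ∑ k ∈ Icc 1 n, ∑ i ∈ range k, lamD n k * (z k i)^2 := by
          rw [Nat.Ico_zero_eq_range, Finset.sum_range_succ']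
          rw [show Icc 1 n = Ico 1 (n+1) from (Finset.Ico_add_one_right_eq_Icc 1 n).symm]
          rw [Finset.sum_Ico_eq_sum_range _ 1 (n+1)]
          simp [Nat.Ico_zero_eq_range, add_comm]
        rw [← el, swap, er]
    _ ≤ ∑ k ∈ Icc 1 n, lamD n k * δ := by
        apply Finset.sum_le_sum
        intro k hk
        rw [← Finset.mul_sum]
        apply mul_le_mul_of_nonneg_left _ (lamD_pos n k).le
        calc ∑ i ∈ range k, (z k i)^2 ≤ ∑ i ∈ Icc 0 k, (z k i)^2 := by
              apply Finset.sum_le_sum_of_subset_of_nonneg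
              · intro x hx; simp only [mem_range] at hx; simp only [mem_Icc]; omega
              · intros; positivity
          _ ≤ δ := hcon k hk
    _ = δ * ∑ k ∈ Icc 1 n, lamD n k := by rw [← Finset.sum_mul]; ring
    _ = δ * (1 / 4 + ∑ i ∈ Icc 2 n, 1 / (2 * (i : ℝ) + 1)) := by
        rw [sum_lamD n hn]
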